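/- For any fixed γ, γ' ∈ S², the pushforward of the product measure μ ⊗ μ on S² × S² under the map (x, y) ↦ I_AAB(γ; x, y) equals the pushforward of μ ⊗ μ under (x, y) ↦ I_AAB(γ'; x, y); that is, when the two base directions are independent and uniformly distributed on S², the distribution of the AAB inconsistency does not depend on the third direction γ. -/

import Mathlib

noncomputable section

open scoped RealInnerProductSpace

/-- ℝ³ as a Euclidean space. -/
abbrev V3 : Type := EuclideanSpace ℝ (Fin 3)

/-- The unit sphere S² in ℝ³. -/
def unitSphere : Set V3 := {v : V3 | ‖v‖ = 1}

/-- γ₁, γ₂, γ₃ are cycle-consistent if λ₁γ₁ + λ₂γ₂ + λ₃γ₃ = 0 for some λ₁, λ₂, λ₃ > 0. -/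
def CycleConsistent (γ₁ γ₂ γ₃ : V3) : Prop :=
  ∃ l₁ l₂ l₃ : ℝ, 0 < l₁ ∧ 0 < l₂ ∧ 0 < l₃ ∧ l₁ • γ₁ + l₂ • γ₂ + l₃ • γ₃ = 0

/-- The cycle-consistency region Ω(γ₁,γ₂) = {γ ∈ S² : γ₁, γ₂, γ are cycle-consistent}. -/
def consistencyRegion (γ₁ γ₂ : V3) : Set V3 :=
  {γ ∈ unitSphere | CycleConsistent γ₁ γ₂ γ}

/-- Great-circle distance d_g(u,v) = arccos⟨u,v⟩ for unit vectors. -/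
def dg (u v : V3) : ℝ := Real.arccos ⟪u, v⟫

/-- The AAB inconsistency I_AAB(γ₃; γ₁, γ₂) = inf_{γ ∈ Ω(γ₁,γ₂)} d_g(γ₃, γ). -/
def IAAB (γ₃ γ₁ γ₂ : V3) : ℝ := sInf ((dg γ₃) '' consistencyRegion γ₁ γ₂)

open MeasureTheory

/-- μ is the uniform probability measure on S²: a probability measure on ℝ³ concentrated on
the unit sphere and invariant under every rotation in SO(3). (These properties characterize
the normalized surface-area measure on S² uniquely.) -/
def IsUniformSphereMeasure (μ : Measure V3) : Prop :=
  IsProbabilityMeasure μ ∧ μ (unitSphereᶜ) = 0 ∧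
    ∀ R : Matrix (Fin 3) (Fin 3) ℝ, R ∈ Matrix.specialOrthogonalGroup (Fin 3) ℝ →
      Measure.map (fun v : V3 => (WithLp.toLp 2 (R.mulVec v) : V3)) μ = μ

namespace Stmt17Aux

/-- The matrix of a linear isometry equivalence of `V3` in the standard basis. -/
def isoMatrix (L : V3 ≃ₗᵢ[ℝ] V3) : Matrix (Fin 3) (Fin 3) ℝ :=
  fun i j => L (EuclideanSpace.single j (1 : ℝ)) i

lemma apply_eq_inner (w : V3) (i : Fin 3) :
    w i = ⟪EuclideanSpace.single i (1 : ℝ), w⟫ := by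
  simp [EuclideanSpace.inner_single_left]

lemma isoMatrix_mulVec_apply (L : V3 ≃ₗᵢ[ℝ] V3) (v : V3) (i : Fin 3) :
    (isoMatrix L).mulVec v i = L v i := by
  have hv : v = ∑ j, v j • EuclideanSpace.single j (1 : ℝ) := by
    conv_lhs => rw [← (EuclideanSpace.basisFun (Fin 3) ℝ).sum_repr v]
    simp [EuclideanSpace.basisFun_apply, EuclideanSpace.basisFun_repr]
  have h1 : L v i = ∑ j, v j * (isoMatrix L) i j := by
    rw [apply_eq_inner (L v) i]
    conv_lhs => rw [hv]
    rw [map_sum, inner_sum]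
    refine Finset.sum_congr rfl fun j _ => ?_
    rw [LinearIsometryEquiv.map_smul, real_inner_smul_right, ← apply_eq_inner]
    rfl
  rw [h1]
  simp [Matrix.mulVec, dotProduct, mul_comm, Fin.sum_univ_three]

lemma isoMatrix_mulVec (L : V3 ≃ₗᵢ[ℝ] V3) (v : V3) :
    (WithLp.toLp 2 ((isoMatrix L).mulVec v) : V3) = L v :=
  PiLp.ext (isoMatrix_mulVec_apply L v)

lemma isoMatrix_orthogonal (L : V3 ≃ₗᵢ[ℝ] V3) :
    star (isoMatrix L) * isoMatrix L = 1 := by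
  ext i j
  have h := L.inner_map_map (EuclideanSpace.single i (1 : ℝ))
    (EuclideanSpace.single j (1 : ℝ))
  rw [EuclideanSpace.inner_single_left] at h
  have h2 : ⟪L (EuclideanSpace.single i (1 : ℝ)), L (EuclideanSpace.single j (1 : ℝ))⟫
      = ∑ k, (isoMatrix L) k i * (isoMatrix L) k j := by
    rw [PiLp.inner_apply]
    refine Finset.sum_congr rfl fun k _ => ?_
    simp [isoMatrix, mul_comm]
  rw [Matrix.mul_apply, Matrix.one_apply]
  simp only [Matrix.star_apply, star_trivial]
  rw [← h2, h]
  simp only [map_one, one_mul, EuclideanSpace.single_apply]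

lemma isoMatrix_det_pm (L : V3 ≃ₗᵢ[ℝ] V3) :
    (isoMatrix L).det = 1 ∨ (isoMatrix L).det = -1 := by
  have h := congrArg Matrix.det (isoMatrix_orthogonal L)
  rw [Matrix.det_mul, Matrix.det_one, Matrix.star_eq_conjTranspose,
    Matrix.det_conjTranspose, star_trivial] at h
  exact mul_self_eq_one_iff.mp h

lemma isoMatrix_trans (K L : V3 ≃ₗᵢ[ℝ] V3) :
    isoMatrix (K.trans L) = isoMatrix L * isoMatrix K := by
  ext i j
  have h := isoMatrix_mulVec_apply L (K (EuclideanSpace.single j (1 : ℝ))) i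
  simp only [Matrix.mulVec, dotProduct] at h
  rw [Matrix.mul_apply]
  show (L (K (EuclideanSpace.single j (1 : ℝ)))) i = _
  rw [← h]
  rfl

lemma isoMatrix_refl : isoMatrix (LinearIsometryEquiv.refl ℝ V3) = 1 := by
  ext i j
  show (EuclideanSpace.single j (1 : ℝ)) i = _
  rw [EuclideanSpace.single_apply, Matrix.one_apply]

/-- Negation of the second coordinate, as a linear isometry equivalence. -/
def negOne : V3 ≃ₗᵢ[ℝ] V3 :=
  LinearIsometryEquiv.piLpCongrRight 2
    (fun i : Fin 3 => if i = 1 then LinearIsometryEquiv.neg ℝ else LinearIsometryEquiv.refl ℝ ℝ)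

lemma negOne_apply (x : V3) (i : Fin 3) :
    negOne x i = if i = 1 then -(x i) else x i := by
  show (LinearIsometryEquiv.piLpCongrRight 2 _) x i = _
  rw [LinearIsometryEquiv.piLpCongrRight_apply]
  rcases eq_or_ne i 1 with h | h
  · subst h; simp
  · simp [h]

lemma isoMatrix_negOne :
    isoMatrix negOne = Matrix.diagonal (fun i : Fin 3 => if i = 1 then (-1 : ℝ) else 1) := by
  ext i j
  show negOne (EuclideanSpace.single j (1 : ℝ)) i = _
  rw [negOne_apply, Matrix.diagonal_apply, EuclideanSpace.single_apply]
  by_cases h1 : i = 1 <;> by_cases h2 : i = j <;> subst_eqs <;> simp_all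

lemma negOne_det : (isoMatrix negOne).det = -1 := by
  rw [isoMatrix_negOne, Matrix.det_diagonal, Fin.prod_univ_three]
  norm_num [show (0 : Fin 3) ≠ 1 from by decide, show (2 : Fin 3) ≠ 1 from by decide]

lemma orthonormal_single (γ : V3) (hγ : ‖γ‖ = 1) :
    Orthonormal ℝ (Set.restrict {(0 : Fin 3)} (fun _ => γ)) := by
  constructor
  · rintro ⟨i, hi⟩
    exact hγ
  · rintro ⟨i, hi⟩ ⟨j, hj⟩ hij
    exfalso
    apply hij
    simp only [Set.mem_singleton_iff] at hi hj
    exact Subtype.ext (hi.trans hj.symm)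

lemma exists_rot (γ γ' : V3) (hγ : ‖γ‖ = 1) (hγ' : ‖γ'‖ = 1) :
    ∃ L : V3 ≃ₗᵢ[ℝ] V3, (isoMatrix L).det = 1 ∧ L γ' = γ := by
  have hcard : Module.finrank ℝ V3 = Fintype.card (Fin 3) := by simp
  obtain ⟨b, hb⟩ := (orthonormal_single γ' hγ').exists_orthonormalBasis_extension_of_card_eq hcard
  obtain ⟨c, hc⟩ := (orthonormal_single γ hγ).exists_orthonormalBasis_extension_of_card_eq hcard
  have hb0 : b 0 = γ' := hb 0 rfl
  have hc0 : c 0 = γ := hc 0 rfl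
  set L0 : V3 ≃ₗᵢ[ℝ] V3 := b.repr.trans c.repr.symm with hL0def
  have hL0 : L0 γ' = γ := by
    rw [← hb0, hL0def, LinearIsometryEquiv.trans_apply, OrthonormalBasis.repr_self,
      OrthonormalBasis.repr_symm_single, hc0]
  rcases isoMatrix_det_pm L0 with h1 | h1
  · exact ⟨L0, h1, hL0⟩
  · set K : V3 ≃ₗᵢ[ℝ] V3 := (b.repr.trans negOne).trans b.repr.symm with hKdef
    have hnegfix : negOne (EuclideanSpace.single (0 : Fin 3) (1 : ℝ))
        = EuclideanSpace.single (0 : Fin 3) (1 : ℝ) := by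
      refine PiLp.ext fun i => ?_
      rw [negOne_apply]
      by_cases h : i = 1 <;> simp [h, EuclideanSpace.single_apply]
    have hK : K γ' = γ' := by
      rw [← hb0, hKdef, LinearIsometryEquiv.trans_apply, LinearIsometryEquiv.trans_apply,
        OrthonormalBasis.repr_self, hnegfix, OrthonormalBasis.repr_symm_single]
    have hBs : isoMatrix b.repr.symm * isoMatrix b.repr = 1 := by
      rw [← isoMatrix_trans, LinearIsometryEquiv.self_trans_symm, isoMatrix_refl]
    have hBsB : (isoMatrix b.repr.symm).det * (isoMatrix b.repr).det = 1 := by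
      have h := congrArg Matrix.det hBs
      rwa [Matrix.det_mul, Matrix.det_one] at h
    have hKeq : isoMatrix K
        = isoMatrix b.repr.symm * (isoMatrix negOne * isoMatrix b.repr) := by
      rw [hKdef, isoMatrix_trans, isoMatrix_trans]
    have hKdet : (isoMatrix K).det = -1 := by
      rw [hKeq, Matrix.det_mul, Matrix.det_mul, negOne_det]
      linear_combination -hBsB
    refine ⟨K.trans L0, ?_, by rw [LinearIsometryEquiv.trans_apply, hK, hL0]⟩
    rw [isoMatrix_trans, Matrix.det_mul, h1, hKdet]
    norm_num

lemma consistencyRegion_map (L : V3 ≃ₗᵢ[ℝ] V3) (a b : V3) :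
    consistencyRegion (L a) (L b) = ⇑L '' consistencyRegion a b := by
  ext z
  constructor
  · rintro ⟨hz, l₁, l₂, l₃, h1, h2, h3, heq⟩
    refine ⟨L.symm z, ⟨?_, l₁, l₂, l₃, h1, h2, h3, ?_⟩, L.apply_symm_apply z⟩
    · show ‖L.symm z‖ = 1
      rw [LinearIsometryEquiv.norm_map]
      exact hz
    · have h := congrArg L.symm heq
      simpa [map_add, LinearIsometryEquiv.map_smul] using h
  · rintro ⟨w, ⟨hw, l₁, l₂, l₃, h1, h2, h3, heq⟩, rfl⟩
    refine ⟨?_, l₁, l₂, l₃, h1, h2, h3, ?_⟩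
    · show ‖L w‖ = 1
      rw [LinearIsometryEquiv.norm_map]
      exact hw
    · have h := congrArg L heq
      simpa [map_add, LinearIsometryEquiv.map_smul] using h

lemma IAAB_map (L : V3 ≃ₗᵢ[ℝ] V3) (a x y : V3) :
    IAAB (L a) (L x) (L y) = IAAB a x y := by
  unfold IAAB
  congr 1
  rw [consistencyRegion_map, ← Set.image_comp]
  refine Set.image_congr fun z _ => ?_
  show dg (L a) (L z) = dg a z
  unfold dg
  rw [LinearIsometryEquiv.inner_map_map]

end Stmt17Aux

/-- For any fixed γ, γ' ∈ S², the pushforward of μ ⊗ μ under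
(x,y) ↦ I_AAB(γ; x, y) equals the pushforward of μ ⊗ μ under (x,y) ↦ I_AAB(γ'; x, y):
with independent uniform base directions, the distribution of the AAB inconsistency does
not depend on the third direction. -/
theorem stmt_17 (μ : Measure V3) (hμ : IsUniformSphereMeasure μ)
    (γ γ' : V3) (hγ : γ ∈ unitSphere) (hγ' : γ' ∈ unitSphere) :
    Measure.map (fun p : V3 × V3 => IAAB γ p.1 p.2) (μ.prod μ) =
      Measure.map (fun p : V3 × V3 => IAAB γ' p.1 p.2) (μ.prod μ) := by
  classical
  obtain ⟨hprob, hsph, hinv⟩ := hμ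
  haveI := hprob
  obtain ⟨L, hLdet, hLγ⟩ := Stmt17Aux.exists_rot γ γ' hγ hγ'
  set M := Stmt17Aux.isoMatrix L with hM
  have hMso : M ∈ Matrix.specialOrthogonalGroup (Fin 3) ℝ := by
    rw [Matrix.mem_specialOrthogonalGroup_iff]
    refine ⟨?_, hLdet⟩
    rw [Matrix.mem_orthogonalGroup_iff']
    exact Stmt17Aux.isoMatrix_orthogonal L
  have hf : (fun v : V3 => (WithLp.toLp 2 (M.mulVec v) : V3)) = ⇑L :=
    funext fun v => Stmt17Aux.isoMatrix_mulVec L v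
  have hmapL : Measure.map (⇑L) μ = μ := by
    rw [← hf]; exact hinv M hMso
  have hLmeas : Measurable (⇑L) := L.continuous.measurable
  have hprod : Measure.map (Prod.map ⇑L ⇑L) (μ.prod μ) = μ.prod μ := by
    rw [← Measure.map_prod_map μ μ hLmeas hLmeas, hmapL]
  have hTmeas : Measurable (Prod.map ⇑L ⇑L) :=
    (hLmeas.comp measurable_fst).prodMk (hLmeas.comp measurable_snd)
  have hemb : MeasurableEmbedding (Prod.map ⇑L ⇑L) := by
    set e : V3 ≃ᵐ V3 := L.toHomeomorph.toMeasurableEquiv with he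
    have h := (MeasurableEquiv.prodCongr e e).measurableEmbedding
    have hcoe : ⇑e = ⇑L := by
      rw [he, Homeomorph.toMeasurableEquiv_coe, LinearIsometryEquiv.coe_toHomeomorph]
    have : Prod.map ⇑L ⇑L = ⇑(MeasurableEquiv.prodCongr e e) := by
      funext p
      simp only [MeasurableEquiv.prodCongr, MeasurableEquiv.coe_mk, Equiv.prodCongr_apply,
        MeasurableEquiv.coe_toEquiv, hcoe]
    rw [this]
    exact h
  have hfun : (fun p : V3 × V3 => IAAB γ p.1 p.2) ∘ (Prod.map ⇑L ⇑L)
      = fun p : V3 × V3 => IAAB γ' p.1 p.2 := by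
    funext p
    show IAAB γ (L p.1) (L p.2) = IAAB γ' p.1 p.2
    rw [← hLγ, Stmt17Aux.IAAB_map]
  by_cases hm : AEMeasurable (fun p : V3 × V3 => IAAB γ p.1 p.2) (μ.prod μ)
  · conv_lhs => rw [← hprod]
    rw [AEMeasurable.map_map_of_aemeasurable (by rwa [hprod]) hTmeas.aemeasurable, hfun]
  · rw [Measure.map_of_not_aemeasurable hm, Measure.map_of_not_aemeasurable]
    intro h
    apply hm
    have h1 : AEMeasurable ((fun p : V3 × V3 => IAAB γ p.1 p.2) ∘ (Prod.map ⇑L ⇑L))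
        (μ.prod μ) := by rwa [hfun]
    have h2 := hemb.aemeasurable_map_iff.mpr h1
    rwa [hprod] at h2
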